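/- Let W be a finite set of workers, M ⊆ W a set of minority workers, s an injective score function on W, m a minority ratio with 0 ≤ m ≤ 1, and q a nonnegative integer with q ≤ |W| such that m·q is an integer. Then there exists exactly one set W* ⊆ W with |W*| = q such that W* respects minority rights for quota q and is minority fair. -/

import Mathlib

open Finset

variable {ι : Type*} [DecidableEq ι]

/-- The (up to) `k` highest-scoring elements of `X`, chosen greedily
(with injective scores this is the set of the `k` highest-scoring elements). -/
noncomputable def topOf (s : ι → ℝ) : ℕ → Finset ι → Finset ι
  | 0, _ => ∅
  | k + 1, X =>
    if h : X.Nonempty then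
      insert (X.exists_max_image s h).choose
        (topOf s k (X.erase (X.exists_max_image s h).choose))
    else ∅

lemma topOf_subset (s : ι → ℝ) : ∀ (n : ℕ) (X : Finset ι), topOf s n X ⊆ X := by
  intro n
  induction n with
  | zero => intro X; simp [topOf]
  | succ n ih =>
    intro X
    rw [topOf]
    split_ifs with h
    · intro x hx
      rcases mem_insert.1 hx with rfl | hx
      · exact (X.exists_max_image s h).choose_spec.1
      · exact (erase_subset _ _) (ih _ hx)
    · simp

lemma card_topOf (s : ι → ℝ) : ∀ (n : ℕ) (X : Finset ι), (topOf s n X).card = min n X.card := by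
  intro n
  induction n with
  | zero => intro X; simp [topOf]
  | succ n ih =>
    intro X
    rw [topOf]
    split_ifs with h
    · have hwX : (X.exists_max_image s h).choose ∈ X := (X.exists_max_image s h).choose_spec.1
      have hnot : (X.exists_max_image s h).choose ∉
          topOf s n (X.erase (X.exists_max_image s h).choose) := fun hmem =>
        (notMem_erase _ X) (topOf_subset s n _ hmem)
      rw [card_insert_of_notMem hnot, ih, card_erase_of_mem hwX]
      have h1 : 1 ≤ X.card := card_pos.2 h
      omega
    · rw [not_nonempty_iff_eq_empty.1 h]
      simp

lemma mem_topOf (s : ι → ℝ) : ∀ (n : ℕ) (X : Finset ι), Set.InjOn s ↑X → ∀ x : ι,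
    (x ∈ topOf s n X ↔ x ∈ X ∧ (X.filter fun y => s x < s y).card < n) := by
  intro n
  induction n with
  | zero => intro X _ x; simp [topOf]
  | succ n ih =>
    intro X hs x
    rw [topOf]
    split_ifs with h
    · obtain ⟨hwX, hwmax⟩ := (X.exists_max_image s h).choose_spec
      set w := (X.exists_max_image s h).choose with hw
      have hse : Set.InjOn s ↑(X.erase w) := hs.mono (by simpa using (coe_subset.2 (erase_subset w X)))
      constructor
      · intro hx
        rcases mem_insert.1 hx with rfl | hx
        · refine ⟨hwX, ?_⟩
          have he : (X.filter fun y => s w < s y) = ∅ := by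
            apply filter_eq_empty_iff.2
            intro y hy
            exact not_lt.2 (hwmax y hy)
          simp [he]
        · obtain ⟨hx1, hx2⟩ := (ih _ hse x).1 hx
          refine ⟨mem_of_mem_erase hx1, ?_⟩
          have hsub : (X.filter fun y => s x < s y) ⊆
              insert w ((X.erase w).filter fun y => s x < s y) := by
            intro y hy
            rcases mem_filter.1 hy with ⟨hyX, hyP⟩
            by_cases hyw : y = w
            · exact hyw ▸ mem_insert_self _ _
            · exact mem_insert_of_mem (mem_filter.2 ⟨mem_erase.2 ⟨hyw, hyX⟩, hyP⟩)
          calc (X.filter fun y => s x < s y).card ≤ _ := card_le_card hsub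
            _ ≤ ((X.erase w).filter fun y => s x < s y).card + 1 := card_insert_le _ _
            _ < n + 1 := by omega
      · rintro ⟨hxX, hxc⟩
        by_cases hxw : x = w
        · exact hxw ▸ mem_insert_self _ _
        · apply mem_insert_of_mem
          have hlt : s x < s w := by
            rcases lt_or_eq_of_le (hwmax x hxX) with h' | h'
            · exact h'
            · exact absurd (hs hxX hwX h') hxw
          have hwf : w ∈ X.filter fun y => s x < s y := mem_filter.2 ⟨hwX, hlt⟩
          have heq : ((X.erase w).filter fun y => s x < s y)
              = (X.filter fun y => s x < s y).erase w := by
            ext z; simp only [mem_filter, mem_erase]; tauto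
          refine (ih _ hse x).2 ⟨mem_erase.2 ⟨hxw, hxX⟩, ?_⟩
          rw [heq, card_erase_of_mem hwf]
          have : 1 ≤ (X.filter fun y => s x < s y).card := card_pos.2 ⟨w, hwf⟩
          omega
    · simp [not_nonempty_iff_eq_empty.1 h]

lemma lt_of_topOf {s : ι → ℝ} {X : Finset ι} (hs : Set.InjOn s ↑X) {n : ℕ} {x y : ι}
    (hx : x ∈ topOf s n X) (hyX : y ∈ X) (hy : y ∉ topOf s n X) : s y < s x := by
  obtain ⟨hxX, hxc⟩ := (mem_topOf s n X hs x).1 hx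
  have hyc : ¬ ((X.filter fun z => s y < s z).card < n) := fun hc =>
    hy ((mem_topOf s n X hs y).2 ⟨hyX, hc⟩)
  push_neg at hyc
  have hxy : x ≠ y := fun h => hy (h ▸ hx)
  rcases lt_trichotomy (s y) (s x) with h' | h' | h'
  · exact h'
  · exact absurd (hs hyX hxX h').symm hxy
  · exfalso
    have hsub : insert y (X.filter fun z => s y < s z) ⊆ X.filter fun z => s x < s z := by
      intro z hz
      rcases mem_insert.1 hz with rfl | hz
      · exact mem_filter.2 ⟨hyX, h'⟩
      · rcases mem_filter.1 hz with ⟨hzX, hzP⟩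
        exact mem_filter.2 ⟨hzX, h'.trans hzP⟩
    have := card_le_card hsub
    rw [card_insert_of_notMem (by simp)] at this
    omega

lemma topOf_mono {s : ι → ℝ} {X : Finset ι} (hs : Set.InjOn s ↑X) {n n' : ℕ} (h : n ≤ n') :
    topOf s n X ⊆ topOf s n' X := by
  intro x hx
  obtain ⟨h1, h2⟩ := (mem_topOf s n X hs x).1 hx
  exact (mem_topOf s n' X hs x).2 ⟨h1, lt_of_lt_of_le h2 h⟩

lemma topOf_eq_of {s : ι → ℝ} {X A : Finset ι} (hs : Set.InjOn s ↑X) (hA : A ⊆ X)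
    (h : ∀ w ∈ A, ∀ w' ∈ X, w' ∉ A → s w' < s w) : topOf s A.card X = A := by
  have hsub : A ⊆ topOf s A.card X := by
    intro x hx
    refine (mem_topOf s A.card X hs x).2 ⟨hA hx, ?_⟩
    have hsub2 : (X.filter fun y => s x < s y) ⊆ A.erase x := by
      intro y hy
      rcases mem_filter.1 hy with ⟨hyX, hyP⟩
      refine mem_erase.2 ⟨fun hh => by simp [hh] at hyP, ?_⟩
      by_contra hyA
      exact absurd (h x hx y hyX hyA) (not_lt.2 hyP.le)
    calc (X.filter fun y => s x < s y).card ≤ (A.erase x).card := card_le_card hsub2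
      _ = A.card - 1 := card_erase_of_mem hx
      _ < A.card := by
          have : 1 ≤ A.card := card_pos.2 ⟨x, hx⟩
          omega
  have hc : (topOf s A.card X).card ≤ A.card := by
    rw [card_topOf]; exact min_le_left _ _
  exact (eq_of_subset_of_card_le hsub hc).symm

/-- `H` respects minority rights for quota `q` (w.r.t. minorities `M` and ratio `m`):
either `|M| ≥ m·q` and the fraction of minorities in `H` is at least `m`
(stated multiplicatively as `ω(H) ≥ m·|H|`), or `|M| < m·q` and `M ⊆ H`. -/
def RespectsRightsSet (M : Finset ι) (m : ℝ) (q : ℕ) (H : Finset ι) : Prop :=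
  (m * (q : ℝ) ≤ (M.card : ℝ) ∧ m * (H.card : ℝ) ≤ ((H ∩ M).card : ℝ)) ∨
  ((M.card : ℝ) < m * (q : ℝ) ∧ M ⊆ H)

/-- `H` is minority fair (w.r.t. workers `W`, minorities `M`, scores `s`, ratio `m`):
(i) within `M` and within `W ∖ M` selection follows the scores; (ii) no minority with a
higher score is left out while a non-minority is hired; (iii) a lower-scoring minority is
hired over a higher-scoring non-minority only if the minority fraction of `H` is at most
`m` (stated multiplicatively as `ω(H) ≤ m·|H|`). -/
def MinorityFairSet (W M : Finset ι) (s : ι → ℝ) (m : ℝ) (H : Finset ι) : Prop :=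
  (∀ w ∈ M, ∀ w' ∈ M, w ∈ H → w' ∉ H → s w' < s w) ∧
  (∀ w ∈ W \ M, ∀ w' ∈ W \ M, w ∈ H → w' ∉ H → s w' < s w) ∧
  (∀ w ∈ W \ M, ∀ w' ∈ M, s w < s w' → w ∈ H → w' ∈ H) ∧
  ((∃ w ∈ W \ M, ∃ w' ∈ M, s w' < s w ∧ w ∉ H ∧ w' ∈ H) →
    ((H ∩ M).card : ℝ) ≤ m * (H.card : ℝ))

/-- For every hiring problem `(W, M, s, m)` (with `M ⊆ W`, `s` injective
on `W`, `0 ≤ m ≤ 1`) and every `q ≤ |W|` such that `m·q` is an integer, there exists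
exactly one set `W* ⊆ W` with `|W*| = q` that respects minority rights for quota `q` and
is minority fair. -/
theorem unique_fair_rights_set (W M : Finset ι) (s : ι → ℝ) (m : ℝ) (q : ℕ)
    (hMW : M ⊆ W) (hs : Set.InjOn s ↑W) (hm0 : 0 ≤ m) (hm1 : m ≤ 1)
    (hq : q ≤ W.card) (hint : ∃ k : ℕ, m * (q : ℝ) = (k : ℝ)) :
    ∃! H : Finset ι, H ⊆ W ∧ H.card = q ∧ RespectsRightsSet M m q H ∧
      MinorityFairSet W M s m H := by
  classical
  obtain ⟨k, hk⟩ := hint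
  have hsM : Set.InjOn s ↑M := hs.mono (coe_subset.2 hMW)
  have hNW : W \ M ⊆ W := sdiff_subset
  have hsN : Set.InjOn s ↑(W \ M) := hs.mono (coe_subset.2 hNW)
  have hkq : k ≤ q := by
    have h1 : (k : ℝ) ≤ (q : ℝ) := by rw [← hk]; nlinarith
    exact_mod_cast h1
  set T := topOf s q W with hT
  set a := (T ∩ M).card with ha
  have hTW : T ⊆ W := topOf_subset s q W
  have hTcard : T.card = q := by rw [hT, card_topOf]; omega
  have haM : a ≤ M.card := card_le_card inter_subset_right
  have haq : a ≤ q := by rw [← hTcard]; exact card_le_card inter_subset_left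
  -- split of the overall top-q
  have hTm : topOf s a M = T ∩ M := by
    apply topOf_eq_of hsM inter_subset_right
    intro w hw w' hw'M hw'n
    exact lt_of_topOf hs (mem_of_mem_inter_left hw) (hMW hw'M)
      (fun hT' => hw'n (mem_inter.2 ⟨hT', hw'M⟩))
  have hTNsub : T \ M ⊆ W \ M := sdiff_subset_sdiff hTW (Finset.Subset.refl M)
  have hTNcard : (T \ M).card = q - a := by
    have := card_sdiff_add_card_inter T M
    omega
  have hTn : topOf s (q - a) (W \ M) = T \ M := by
    have hprop : ∀ w ∈ T \ M, ∀ w' ∈ W \ M, w' ∉ T \ M → s w' < s w := by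
      intro w hw w' hw' hw'n
      have hw'T : w' ∉ T := fun hh => hw'n (mem_sdiff.2 ⟨hh, (mem_sdiff.1 hw').2⟩)
      exact lt_of_topOf hs (mem_sdiff.1 hw).1 (hNW hw') hw'T
    have := topOf_eq_of hsN hTNsub hprop
    rwa [hTNcard] at this
  set r := max a (min k M.card) with hr
  have hrM : r ≤ M.card := max_le haM (min_le_right _ _)
  have hrq : r ≤ q := max_le haq (le_trans (min_le_left _ _) hkq)
  have har : a ≤ r := le_max_left _ _
  have hminr : min k M.card ≤ r := le_max_right _ _
  have hNc : q - r ≤ (W \ M).card := by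
    have := card_le_card hTNsub
    omega
  set A1 := topOf s r M with hA1
  set A2 := topOf s (q - r) (W \ M) with hA2
  have hA1M : A1 ⊆ M := topOf_subset s r M
  have hA2N : A2 ⊆ W \ M := topOf_subset s (q - r) (W \ M)
  have cA1 : A1.card = r := by rw [hA1, card_topOf]; omega
  have cA2 : A2.card = q - r := by rw [hA2, card_topOf]; omega
  have hdisj : Disjoint A1 A2 := by
    rw [disjoint_left]
    intro x hx1 hx2
    exact (mem_sdiff.1 (hA2N hx2)).2 (hA1M hx1)
  set Hstar := A1 ∪ A2 with hHdef
  have hHW : Hstar ⊆ W := union_subset (hA1M.trans hMW) (hA2N.trans hNW)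
  have hHcard : Hstar.card = q := by
    rw [hHdef, card_union_of_disjoint hdisj, cA1, cA2]; omega
  have hHM : Hstar ∩ M = A1 := by
    ext x
    simp only [hHdef, mem_inter, mem_union]
    constructor
    · rintro ⟨hx1 | hx2, hxM⟩
      · exact hx1
      · exact absurd hxM (mem_sdiff.1 (hA2N hx2)).2
    · intro hx
      exact ⟨Or.inl hx, hA1M hx⟩
  have hmemM : ∀ x ∈ M, (x ∈ Hstar ↔ x ∈ A1) := by
    intro x hxM
    constructor
    · intro hx
      rcases mem_union.1 hx with h1 | h2
      · exact h1
      · exact absurd hxM (mem_sdiff.1 (hA2N h2)).2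
    · intro hx; exact mem_union_left _ hx
  have hmemN : ∀ x ∈ W \ M, (x ∈ Hstar ↔ x ∈ A2) := by
    intro x hxN
    constructor
    · intro hx
      rcases mem_union.1 hx with h1 | h2
      · exact absurd (hA1M h1) (mem_sdiff.1 hxN).2
      · exact h2
    · intro hx; exact mem_union_right _ hx
  -- the key counting argument
  have key : ∀ w' ∈ M, w' ∉ A1 → ∀ w ∈ A2, ¬ (s w < s w') := by
    intro w' hw'M hw'A w hwA hlt
    have hw'r : r ≤ (M.filter fun y => s w' < s y).card := by
      by_contra hc
      push_neg at hc
      exact hw'A ((mem_topOf s r M hsM w').2 ⟨hw'M, hc⟩)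
    have hMr : r + 1 ≤ M.card := by
      have hsub : (M.filter fun y => s w' < s y) ⊆ M.erase w' := by
        intro y hy
        rcases mem_filter.1 hy with ⟨h1, h2⟩
        exact mem_erase.2 ⟨fun hh => by simp [hh] at h2, h1⟩
      have := card_le_card hsub
      rw [card_erase_of_mem hw'M] at this
      have hM1 : 1 ≤ M.card := card_pos.2 ⟨w', hw'M⟩
      omega
    have hwrank : ((W \ M).filter fun y => s w < s y).card < q - r :=
      ((mem_topOf _ _ _ hsN w).1 hwA).2
    have hclaim : topOf s (r + 1) M ⊆ T ∩ M := by
      intro x hx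
      obtain ⟨hxM, hxc⟩ := (mem_topOf s (r + 1) M hsM x).1 hx
      have hxw' : s w' ≤ s x := by
        by_contra hcon
        push_neg at hcon
        have hsub : insert w' (M.filter fun y => s w' < s y) ⊆ M.filter fun y => s x < s y := by
          intro z hz
          rcases mem_insert.1 hz with rfl | hz
          · exact mem_filter.2 ⟨hw'M, hcon⟩
          · rcases mem_filter.1 hz with ⟨h1, h2⟩
            exact mem_filter.2 ⟨h1, hcon.trans h2⟩
        have hcard := card_le_card hsub
        rw [card_insert_of_notMem (by simp)] at hcard
        omega
      have hxw : s w < s x := lt_of_lt_of_le hlt hxw'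
      refine mem_inter.2 ⟨?_, hxM⟩
      refine (mem_topOf s q W hs x).2 ⟨hMW hxM, ?_⟩
      have hsplit : (W.filter fun y => s x < s y).card
          = (M.filter fun y => s x < s y).card + ((W \ M).filter fun y => s x < s y).card := by
        rw [← card_union_of_disjoint (disjoint_filter_filter disjoint_sdiff),
          ← filter_union, union_sdiff_of_subset hMW]
      have h2 : ((W \ M).filter fun y => s x < s y).card
          ≤ ((W \ M).filter fun y => s w < s y).card := by
        apply card_le_card
        intro y hy
        rcases mem_filter.1 hy with ⟨h1', h2'⟩
        exact mem_filter.2 ⟨h1', hxw.trans h2'⟩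
      omega
    have hfin : r + 1 ≤ a := by
      have hc := card_le_card hclaim
      rw [card_topOf] at hc
      omega
    omega
  have hrights : RespectsRightsSet M m q Hstar := by
    by_cases hcase : k ≤ M.card
    · left
      constructor
      · rw [hk]; exact_mod_cast hcase
      · rw [hHcard, hk, hHM, cA1]
        have : k ≤ r := by omega
        exact_mod_cast this
    · push_neg at hcase
      right
      constructor
      · rw [hk]; exact_mod_cast hcase
      · have hr1 : r = M.card := by omega
        have hA1eq : A1 = M := eq_of_subset_of_card_le hA1M (by rw [cA1, hr1])
        intro x hx
        exact mem_union_left _ (hA1eq ▸ hx)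
  have hfair : MinorityFairSet W M s m Hstar := by
    refine ⟨?_, ?_, ?_, ?_⟩
    · intro w hwM w' hw'M hwH hw'H
      exact lt_of_topOf hsM ((hmemM w hwM).1 hwH) hw'M
        (fun hh => hw'H ((hmemM w' hw'M).2 hh))
    · intro w hwN w' hw'N hwH hw'H
      exact lt_of_topOf hsN ((hmemN w hwN).1 hwH) hw'N
        (fun hh => hw'H ((hmemN w' hw'N).2 hh))
    · intro w hwN w' hw'M hlt hwH
      by_contra hw'H
      exact key w' hw'M (fun hh => hw'H ((hmemM w' hw'M).2 hh)) w
        ((hmemN w hwN).1 hwH) hlt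
    · rintro ⟨w, hwN, w', hw'M, hlt, hwH, hw'H⟩
      rw [hHM, hHcard, cA1, hk]
      by_cases hcase : a ≤ min k M.card
      · have : r ≤ k := by omega
        exact_mod_cast Nat.cast_le.2 this
      · push_neg at hcase
        exfalso
        have hra : r = a := by omega
        have hw'T : w' ∈ T := by
          have h1 : w' ∈ A1 := (hmemM w' hw'M).1 hw'H
          rw [hA1, hra, hTm] at h1
          exact mem_of_mem_inter_left h1
        have hwT : w ∉ T := by
          intro hwT
          have h1 : w ∈ T \ M := mem_sdiff.2 ⟨hwT, (mem_sdiff.1 hwN).2⟩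
          rw [← hTn] at h1
          have h2 : w ∈ A2 := by rw [hA2, hra]; exact h1
          exact hwH ((hmemN w hwN).2 h2)
        exact absurd hlt (not_lt.2 (lt_of_topOf hs hw'T (hNW hwN) hwT).le)
  refine ⟨Hstar, ⟨hHW, hHcard, hrights, hfair⟩, ?_⟩
  rintro H ⟨hHW', hHq, hRights, f1, f2, f3, f4⟩
  set b := (H ∩ M).card with hb
  have hbM : b ≤ M.card := card_le_card inter_subset_right
  have hHMeq : topOf s b M = H ∩ M := by
    apply topOf_eq_of hsM inter_subset_right
    intro w hw w' hw'M hw'n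
    exact f1 w (mem_of_mem_inter_right hw) w' hw'M (mem_of_mem_inter_left hw)
      (fun hh => hw'n (mem_inter.2 ⟨hh, hw'M⟩))
  have hHNcard : (H \ M).card = q - b := by
    have := card_sdiff_add_card_inter H M
    omega
  have hHNeq : topOf s (q - b) (W \ M) = H \ M := by
    have h1 : H \ M ⊆ W \ M := sdiff_subset_sdiff hHW' (Finset.Subset.refl M)
    have hprop : ∀ w ∈ H \ M, ∀ w' ∈ W \ M, w' ∉ H \ M → s w' < s w := by
      intro w hw w' hw' hw'n
      have hw'H : w' ∉ H := fun hh => hw'n (mem_sdiff.2 ⟨hh, (mem_sdiff.1 hw').2⟩)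
      exact f2 w (h1 hw) w' hw' (mem_sdiff.1 hw).1 hw'H
    have := topOf_eq_of hsN h1 hprop
    rwa [hHNcard] at this
  have hb1 : min k M.card ≤ b := by
    rcases hRights with ⟨h1, h2⟩ | ⟨h1, h2⟩
    · rw [hHq, hk] at h2
      have : k ≤ b := by exact_mod_cast h2
      omega
    · have : H ∩ M = M := by
        apply Finset.Subset.antisymm inter_subset_right
        intro x hx
        exact mem_inter.2 ⟨h2 hx, hx⟩
      rw [hb, this]
      omega
  have hb2 : a ≤ b := by
    by_contra hc
    push_neg at hc
    have hcard1 : (topOf s a M).card = a := by rw [card_topOf]; omega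
    have hcard2 : (topOf s b M).card = b := by rw [card_topOf]; omega
    obtain ⟨w', hw'⟩ : (topOf s a M \ topOf s b M).Nonempty := by
      rw [← card_pos, card_sdiff_of_subset (topOf_mono hsM hc.le), hcard1, hcard2]
      omega
    rcases mem_sdiff.1 hw' with ⟨hw'a, hw'b⟩
    have hw'M : w' ∈ M := topOf_subset _ _ _ hw'a
    have hw'H : w' ∉ H := fun hh => hw'b (hHMeq ▸ mem_inter.2 ⟨hh, hw'M⟩)
    have hw'T : w' ∈ T := mem_of_mem_inter_left (hTm ▸ hw'a)
    obtain ⟨w, hwH, hwT⟩ : ∃ w ∈ H, w ∉ T := by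
      by_contra hcc
      push_neg at hcc
      have : H = T := eq_of_subset_of_card_le hcc (by rw [hTcard, hHq])
      exact hw'H (this ▸ hw'T)
    have hlt : s w < s w' := lt_of_topOf hs hw'T (hHW' hwH) hwT
    by_cases hwM : w ∈ M
    · exact absurd (f1 w hwM w' hw'M hwH hw'H) (not_lt.2 hlt.le)
    · exact hw'H (f3 w (mem_sdiff.2 ⟨hHW' hwH, hwM⟩) w' hw'M hlt hwH)
  have hb3 : b ≤ r := by
    by_contra hc
    push_neg at hc
    have hcard1 : (topOf s a M).card = a := by rw [card_topOf]; omega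
    have hcard2 : (topOf s b M).card = b := by rw [card_topOf]; omega
    obtain ⟨w', hw'⟩ : (topOf s b M \ topOf s a M).Nonempty := by
      rw [← card_pos, card_sdiff_of_subset (topOf_mono hsM (by omega)), hcard1, hcard2]
      omega
    rcases mem_sdiff.1 hw' with ⟨hw'b, hw'a⟩
    have hw'M : w' ∈ M := topOf_subset _ _ _ hw'b
    have hw'H : w' ∈ H := mem_of_mem_inter_left (hHMeq ▸ hw'b)
    have hw'T : w' ∉ T := fun hh => hw'a (hTm ▸ mem_inter.2 ⟨hh, hw'M⟩)
    obtain ⟨w, hwT, hwH⟩ : ∃ w ∈ T, w ∉ H := by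
      by_contra hcc
      push_neg at hcc
      have : T = H := eq_of_subset_of_card_le hcc (by rw [hTcard, hHq])
      exact hw'T (this ▸ hw'H)
    have hlt : s w' < s w := lt_of_topOf hs hwT (hMW hw'M) hw'T
    by_cases hwM : w ∈ M
    · exact absurd (f1 w' hw'M w hwM hw'H hwH) (not_lt.2 hlt.le)
    · have h4 := f4 ⟨w, mem_sdiff.2 ⟨hTW hwT, hwM⟩, w', hw'M, hlt, hwH, hw'H⟩
      rw [hHq, hk] at h4
      have : b ≤ k := by exact_mod_cast h4
      omega
  have hbr : b = r := le_antisymm hb3 (max_le hb2 hb1)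
  have h1 : H ∩ M = A1 := by rw [← hHMeq, hbr, hA1]
  have h2 : H \ M = A2 := by rw [← hHNeq, hbr, hA2]
  rw [hHdef, ← h1, ← h2]
  ext x
  simp only [mem_union, mem_inter, mem_sdiff]
  tauto
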